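/- Let β > γ > 0 be real numbers and α > 0 with α² = β² + γ² (the legs and hypotenuse of a nonisosceles right triangle), and let R₁ = α²/(4β), R₂ = α²/(4γ). Then the following are equivalent: (i) R₁ = γ; (ii) R₂ = β; (iii) β/γ = 2 + Real.sqrt 3 (equivalently, the angle ω with tan ω = β/γ equals 75°). -/
import Mathlib


theorem R₁_eq_γ_iff (α β γ : ℝ) (hγ : 0 < γ) (hβγ : γ < β) (hα : 0 < α)
    (hpyth : α ^ 2 = β ^ 2 + γ ^ 2) :
    (α ^ 2 / (4 * β) = γ ↔ α ^ 2 / (4 * γ) = β) ∧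
    (α ^ 2 / (4 * γ) = β ↔ β / γ = 2 + Real.sqrt 3) := by
  have hβ : 0 < β := hγ.trans hβγ
  have hs : Real.sqrt 3 ^ 2 = 3 := Real.sq_sqrt (by norm_num)
  have hs1 : 1 < Real.sqrt 3 := by nlinarith [Real.sqrt_nonneg 3]
  constructor
  · rw [div_eq_iff (by positivity), div_eq_iff (by positivity)]
    constructor <;> intro h <;> linarith
  · rw [div_eq_iff (by positivity : (4:ℝ) * γ ≠ 0)]
    constructor
    · intro h
      have ht : 1 < β / γ := (one_lt_div hγ).mpr hβγ
      have key : (β / γ - 2) ^ 2 = Real.sqrt 3 ^ 2 := by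
        rw [hs]
        field_simp
        nlinarith
      have hz : (β / γ - 2 - Real.sqrt 3) * (β / γ - 2 + Real.sqrt 3) = 0 := by
        linear_combination key
      rcases mul_eq_zero.mp hz with h1 | h2
      · linarith
      · nlinarith
    · intro h
      have : β = (2 + Real.sqrt 3) * γ := by
        field_simp at h; linarith
      nlinarith
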